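/- Let n ≥ 2 and let g be any simple graph on n vertices. Then the truncated shell distribution n*_S(g) = (n_0(g), …, n_{n-2}(g)) ∈ ℝ^{n-1} does not lie in the interior of the model polytope 𝒫_n = conv{n*_S(h) : h a simple graph on n vertices} = {x ∈ ℝ^{n-1} : x_j ≥ 0 for all j, Σ_{j=0}^{n-2} x_j ≤ n}. Consequently, for a sample of size one from the shell distribution exponential random graph model, the maximum likelihood estimator never exists. -/

import Mathlib

/-- `MinDegGE G k S`: the subgraph of `G` induced on the vertex set `S` has minimum
degree at least `k`, i.e. every vertex of `S` has at least `k` neighbors inside `S`. -/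
def MinDegGE {V : Type*} (G : SimpleGraph V) (k : ℕ) (S : Set V) : Prop :=
  ∀ v ∈ S, k ≤ Nat.card {w : V // G.Adj v w ∧ w ∈ S}

/-- The vertex set of the `k`-core of `G`: the union of all vertex subsets inducing a
subgraph of minimum degree at least `k`. -/
def coreVerts {V : Type*} (G : SimpleGraph V) (k : ℕ) : Set V :=
  {v | ∃ S : Set V, MinDegGE G k S ∧ v ∈ S}

/-- The shell index of `v`: the largest `k` such that `v` belongs to the `k`-core. -/
noncomputable def shellIndex {V : Type*} (G : SimpleGraph V) (v : V) : ℕ :=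
  sSup {k : ℕ | v ∈ coreVerts G k}

/-- `n_j(g)`: the number of vertices of `G` with shell index `j`. -/
noncomputable def shellCount {V : Type*} (G : SimpleGraph V) (j : ℕ) : ℕ :=
  Nat.card {v : V // shellIndex G v = j}

lemma mem_coreVerts_zero {V : Type*} (G : SimpleGraph V) (v : V) : v ∈ coreVerts G 0 :=
  ⟨Set.univ, fun _ _ => Nat.zero_le _, Set.mem_univ v⟩

lemma le_natCard_of_inj {α : Type*} [Finite α] {k : ℕ} (f : Fin k → α)
    (hf : Function.Injective f) : k ≤ Nat.card α := by
  simpa using Nat.card_le_card_of_injective f hf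

lemma natCard_le_of_inj {α : Type*} {k : ℕ} (f : α → Fin k)
    (hf : Function.Injective f) : Nat.card α ≤ k := by
  simpa using Nat.card_le_card_of_injective f hf

lemma card_ne {n : ℕ} (v : Fin n) : Nat.card {w : Fin n // w ≠ v} = n - 1 := by
  simp [Nat.card_eq_fintype_card, Fintype.card_subtype_compl]

lemma coreVerts_bound {n : ℕ} (G : SimpleGraph (Fin n)) {k : ℕ} {v : Fin n}
    (h : v ∈ coreVerts G k) : k ≤ n - 1 := by
  obtain ⟨S, hS, hv⟩ := h
  refine (hS v hv).trans ?_
  have h2 : Nat.card {w : Fin n // G.Adj v w ∧ w ∈ S} ≤ Nat.card {w : Fin n // w ≠ v} :=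
    Nat.card_le_card_of_injective (fun x => ⟨x.1, x.2.1.ne'⟩)
      (fun a b hab => by ext; exact congrArg (fun x => x.1.1) hab)
  rw [card_ne] at h2
  exact h2

lemma shellIndex_le {n : ℕ} (G : SimpleGraph (Fin n)) (v : Fin n) :
    shellIndex G v ≤ n - 1 :=
  csSup_le ⟨0, mem_coreVerts_zero G v⟩ fun _ hk => coreVerts_bound G hk

lemma le_shellIndex {n : ℕ} (G : SimpleGraph (Fin n)) {k : ℕ} {v : Fin n}
    (h : v ∈ coreVerts G k) : k ≤ shellIndex G v :=
  le_csSup ⟨n - 1, fun _ hk => coreVerts_bound G hk⟩ h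

lemma shellIndex_eq {n : ℕ} (G : SimpleGraph (Fin n)) {j : ℕ} {v : Fin n}
    (h1 : v ∈ coreVerts G j) (h2 : ∀ k, v ∈ coreVerts G k → k ≤ j) :
    shellIndex G v = j :=
  le_antisymm (csSup_le ⟨0, mem_coreVerts_zero G v⟩ h2) (le_shellIndex G h1)

lemma shellIndex_mem_core {n : ℕ} (G : SimpleGraph (Fin n)) (v : Fin n) :
    v ∈ coreVerts G (shellIndex G v) :=
  Nat.sSup_mem ⟨0, mem_coreVerts_zero G v⟩ ⟨n - 1, fun _ hk => coreVerts_bound G hk⟩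

lemma shellIndex_top {n : ℕ} (v : Fin n) :
    shellIndex (⊤ : SimpleGraph (Fin n)) v = n - 1 := by
  refine shellIndex_eq _ ?_ (fun k hk => coreVerts_bound _ hk)
  refine ⟨Set.univ, fun u _ => ?_, Set.mem_univ v⟩
  have h2 : Nat.card {w : Fin n // w ≠ u} ≤
      Nat.card {w : Fin n // (⊤ : SimpleGraph (Fin n)).Adj u w ∧ w ∈ Set.univ} :=
    Nat.card_le_card_of_injective (fun x => ⟨x.1, ⟨x.2.symm, Set.mem_univ _⟩⟩)
      (fun a b hab => by ext; exact congrArg (fun x => x.1.1) hab)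
  rw [card_ne] at h2
  exact h2

def pathPow (n j : ℕ) : SimpleGraph (Fin n) where
  Adj a b := a ≠ b ∧ a.val ≤ b.val + j ∧ b.val ≤ a.val + j
  symm := ⟨fun a b ⟨h1, h2, h3⟩ => ⟨h1.symm, h3, h2⟩⟩
  loopless := ⟨fun a h => h.1 rfl⟩

lemma adj_pathPow {n j : ℕ} {a b : Fin n} (h : a.val ≠ b.val)
    (h2 : a.val ≤ b.val + j) (h3 : b.val ≤ a.val + j) : (pathPow n j).Adj a b :=
  show a ≠ b ∧ a.val ≤ b.val + j ∧ b.val ≤ a.val + j from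
  ⟨fun hq => h (congrArg Fin.val hq), h2, h3⟩

lemma shellIndex_pathPow {n j : ℕ} (hj : j + 2 ≤ n) (v : Fin n) :
    shellIndex (pathPow n j) v = j := by
  refine shellIndex_eq _ ?_ ?_
  · -- lower bound: univ is a j-core
    refine ⟨Set.univ, fun u _ => ?_, Set.mem_univ v⟩
    have hu : u.val < n := u.isLt
    by_cases h1 : u.val + j < n
    · refine le_natCard_of_inj
        (fun i => ⟨⟨u.val + i.val + 1, by omega⟩,
          adj_pathPow (show u.val ≠ u.val + i.val + 1 by omega)
            (show u.val ≤ (u.val + i.val + 1) + j by omega)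
            (show u.val + i.val + 1 ≤ u.val + j by have := i.isLt; omega),
          Set.mem_univ _⟩) ?_
      intro a b hab
      have h : u.val + a.val + 1 = u.val + b.val + 1 := congrArg (fun x => x.1.1) hab
      exact Fin.ext (by omega)
    · by_cases h2 : j ≤ u.val
      · refine le_natCard_of_inj
          (fun i => ⟨⟨u.val - i.val - 1, by omega⟩,
            adj_pathPow (show u.val ≠ u.val - i.val - 1 by have := i.isLt; omega)
              (show u.val ≤ (u.val - i.val - 1) + j by have := i.isLt; omega)
              (show u.val - i.val - 1 ≤ u.val + j by omega),
            Set.mem_univ _⟩) ?_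
        intro a b hab
        have h : u.val - a.val - 1 = u.val - b.val - 1 := congrArg (fun x => x.1.1) hab
        have ha := a.isLt
        have hb := b.isLt
        exact Fin.ext (by omega)
      · refine le_natCard_of_inj
          (fun i => ⟨⟨if i.val < u.val then i.val else i.val + 1,
              by have := i.isLt; split <;> omega⟩,
            adj_pathPow
              (show u.val ≠ if i.val < u.val then i.val else i.val + 1 by split <;> omega)
              (show u.val ≤ (if i.val < u.val then i.val else i.val + 1) + j by
                split <;> omega)
              (show (if i.val < u.val then i.val else i.val + 1) ≤ u.val + j by
                have := i.isLt; split <;> omega),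
            Set.mem_univ _⟩) ?_
        intro a b hab
        have h : (if a.val < u.val then a.val else a.val + 1)
            = (if b.val < u.val then b.val else b.val + 1) := congrArg (fun x => x.1.1) hab
        split at h <;> split at h <;> exact Fin.ext (by omega)
  · -- upper bound
    rintro k ⟨S, hS, hvS⟩
    have hfin : S.Finite := Set.toFinite S
    have hne : (hfin.toFinset).Nonempty := ⟨v, hfin.mem_toFinset.2 hvS⟩
    set m := hfin.toFinset.max' hne with hm
    have hmS : m ∈ S := hfin.mem_toFinset.1 (hfin.toFinset.max'_mem hne)
    have hmax : ∀ w ∈ S, w.val ≤ m.val :=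
      fun w hw => hfin.toFinset.le_max' w (hfin.mem_toFinset.2 hw)
    refine (hS m hmS).trans ?_
    refine natCard_le_of_inj (fun x => ⟨m.val - x.1.val - 1, ?_⟩) ?_
    · obtain ⟨⟨hne', hd1, hd2⟩, hxS⟩ :
          (m ≠ x.1 ∧ m.val ≤ x.1.val + j ∧ x.1.val ≤ m.val + j) ∧ x.1 ∈ S := x.2
      have h1 : x.1.val ≤ m.val := hmax _ hxS
      have h2 : x.1.val ≠ m.val := fun h => hne' (Fin.ext h.symm)
      omega
    · intro a b hab
      obtain ⟨⟨hne1, hd11, hd12⟩, haS⟩ :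
          (m ≠ a.1 ∧ m.val ≤ a.1.val + j ∧ a.1.val ≤ m.val + j) ∧ a.1 ∈ S := a.2
      obtain ⟨⟨hne2, hd21, hd22⟩, hbS⟩ :
          (m ≠ b.1 ∧ m.val ≤ b.1.val + j ∧ b.1.val ≤ m.val + j) ∧ b.1 ∈ S := b.2
      have h1 : a.1.val ≤ m.val := hmax _ haS
      have h2 : a.1.val ≠ m.val := fun h => hne1 (Fin.ext h.symm)
      have h3 : b.1.val ≤ m.val := hmax _ hbS
      have h4 : b.1.val ≠ m.val := fun h => hne2 (Fin.ext h.symm)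
      have := congrArg Fin.val hab
      simp only at this
      ext
      omega

lemma shellCount_eq_zero {n : ℕ} (G : SimpleGraph (Fin n)) {c j : ℕ}
    (hc : ∀ v : Fin n, shellIndex G v = c) (hj : j ≠ c) : shellCount G j = 0 := by
  have : IsEmpty {v : Fin n // shellIndex G v = j} :=
    ⟨fun x => hj ((hc x.1) ▸ x.2.symm ▸ rfl)⟩
  exact Nat.card_of_isEmpty

lemma shellCount_eq_n {n : ℕ} (G : SimpleGraph (Fin n)) {c : ℕ}
    (hc : ∀ v : Fin n, shellIndex G v = c) : shellCount G c = n := by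
  rw [shellCount, Nat.card_congr (Equiv.subtypeUnivEquiv hc)]
  simp

lemma sum_shellCount {n : ℕ} (G : SimpleGraph (Fin n)) (hn : 1 ≤ n) :
    ∑ j ∈ Finset.range n, shellCount G j = n := by
  have key : (Finset.univ : Finset (Fin n)).card =
      ∑ j ∈ Finset.range n, (Finset.univ.filter fun v => shellIndex G v = j).card :=
    Finset.card_eq_sum_card_fiberwise
      (fun v _ => Finset.mem_range.2 (lt_of_le_of_lt (shellIndex_le G v) (by omega)))
  have h2 : ∀ j, shellCount G j = (Finset.univ.filter fun v => shellIndex G v = j).card := by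
    intro j
    rw [shellCount, Nat.card_eq_fintype_card, Fintype.card_subtype]
  simp_rw [h2]
  rw [← key, Finset.card_univ, Fintype.card_fin]

lemma all_shellIndex_of_max {n : ℕ} (hn : 2 ≤ n) (G : SimpleGraph (Fin n)) {v : Fin n}
    (hv : shellIndex G v = n - 1) : ∀ u : Fin n, shellIndex G u = n - 1 := by
  have hmem : v ∈ coreVerts G (n - 1) := hv ▸ shellIndex_mem_core G v
  obtain ⟨S, hS, hvS⟩ := hmem
  have key : ∀ u ∈ S, ∀ w : Fin n, w ≠ u → G.Adj u w ∧ w ∈ S := by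
    intro u huS
    have hsub : {w : Fin n | G.Adj u w ∧ w ∈ S} ⊆ {w : Fin n | w ≠ u} := by
      rintro w ⟨hadj, _⟩
      exact hadj.ne'
    have h1 : n - 1 ≤ Set.ncard {w : Fin n | G.Adj u w ∧ w ∈ S} := by
      rw [← Nat.card_coe_set_eq]
      exact hS u huS
    have h2 : Set.ncard {w : Fin n | w ≠ u} = n - 1 := by
      rw [← Nat.card_coe_set_eq]
      exact card_ne u
    have hA : {w : Fin n | G.Adj u w ∧ w ∈ S} = {w : Fin n | w ≠ u} :=
      Set.eq_of_subset_of_ncard_le hsub (by omega)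
    intro w hw
    exact hA.symm.subset hw
  have hSuniv : ∀ u : Fin n, u ∈ S := by
    intro u
    by_cases h : u = v
    · exact h ▸ hvS
    · exact (key v hvS u h).2
  intro u
  exact shellIndex_eq G ⟨S, hS, hSuniv u⟩ (fun k hk => coreVerts_bound G hk)

lemma sum_trunc_le {n : ℕ} (hn : 2 ≤ n) (H : SimpleGraph (Fin n)) :
    ∑ j : Fin (n - 1), (shellCount H (j : ℕ) : ℝ) ≤ (n : ℝ) := by
  rw [Fin.sum_univ_eq_sum_range (fun j => (shellCount H j : ℝ)) (n - 1)]
  have h1 : ∑ j ∈ Finset.range (n - 1), shellCount H j ≤ n :=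
    le_trans (Finset.sum_le_sum_of_subset (Finset.range_subset_range.2 (by omega)))
      (le_of_eq (sum_shellCount H (by omega)))
  exact_mod_cast h1

lemma hull_eq {n : ℕ} (hn : 2 ≤ n) :
    convexHull ℝ {x : Fin (n - 1) → ℝ |
        ∃ H : SimpleGraph (Fin n), x = fun j : Fin (n - 1) => (shellCount H (j : ℕ) : ℝ)} =
      {x : Fin (n - 1) → ℝ | (∀ j, 0 ≤ x j) ∧ ∑ j, x j ≤ (n : ℝ)} := by
  set SD := {x : Fin (n - 1) → ℝ |
      ∃ H : SimpleGraph (Fin n), x = fun j : Fin (n - 1) => (shellCount H (j : ℕ) : ℝ)}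
    with hSD
  have hnR : (0 : ℝ) < n := by exact_mod_cast (by omega : 0 < n)
  have hTconv : Convex ℝ {x : Fin (n - 1) → ℝ | (∀ j, 0 ≤ x j) ∧ ∑ j, x j ≤ (n : ℝ)} := by
    intro x hx y hy a b ha hb hab
    constructor
    · intro j
      simp only [Pi.add_apply, Pi.smul_apply, smul_eq_mul]
      exact add_nonneg (mul_nonneg ha (hx.1 j)) (mul_nonneg hb (hy.1 j))
    · simp only [Pi.add_apply, Pi.smul_apply, smul_eq_mul]
      rw [Finset.sum_add_distrib, ← Finset.mul_sum, ← Finset.mul_sum]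
      nlinarith [hx.2, hy.2]
  apply le_antisymm
  · -- hull ⊆ T
    apply convexHull_min _ hTconv
    rintro x ⟨H, rfl⟩
    exact ⟨fun j => Nat.cast_nonneg _, sum_trunc_le hn H⟩
  · -- T ⊆ hull
    intro x hx
    classical
    set w : Option (Fin (n - 1)) → ℝ :=
      fun o => Option.elim o (1 - (∑ j, x j) / n) (fun j => x j / n) with hw
    set z : Option (Fin (n - 1)) → (Fin (n - 1) → ℝ) :=
      fun o => Option.elim o
        (fun i : Fin (n - 1) => (shellCount (⊤ : SimpleGraph (Fin n)) (i : ℕ) : ℝ))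
        (fun j => fun i : Fin (n - 1) => (shellCount (pathPow n (j : ℕ)) (i : ℕ) : ℝ)) with hz
    have hzmem : ∀ o, z o ∈ convexHull ℝ SD := by
      intro o
      apply subset_convexHull
      cases o with
      | none => exact ⟨⊤, rfl⟩
      | some j => exact ⟨pathPow n (j : ℕ), rfl⟩
    have hw0 : ∀ o, 0 ≤ w o := by
      intro o
      cases o with
      | none =>
        simp only [hw, Option.elim]
        rw [sub_nonneg, div_le_one hnR]
        exact hx.2
      | some j => exact div_nonneg (hx.1 j) (le_of_lt hnR)
    have hwsum : ∑ o : Option (Fin (n - 1)), w o = 1 := by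
      rw [Fintype.sum_option]
      simp only [hw, Option.elim]
      rw [← Finset.sum_div]
      ring
    have hznone : ∀ i : Fin (n - 1), z none i = 0 := by
      intro i
      simp only [hz, Option.elim]
      have : shellCount (⊤ : SimpleGraph (Fin n)) (i : ℕ) = 0 :=
        shellCount_eq_zero _ (shellIndex_top) (by have := i.isLt; omega)
      rw [this, Nat.cast_zero]
    have hzsome : ∀ j i : Fin (n - 1), z (some j) i = if i = j then (n : ℝ) else 0 := by
      intro j i
      have hj2 : (j : ℕ) + 2 ≤ n := by have := j.isLt; omega
      simp only [hz, Option.elim]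
      by_cases h : i = j
      · subst h
        rw [if_pos rfl, shellCount_eq_n _ (shellIndex_pathPow hj2)]
      · rw [if_neg h, shellCount_eq_zero _ (shellIndex_pathPow hj2)
          (fun hh => h (Fin.ext hh)), Nat.cast_zero]
    have hcomb : ∑ o : Option (Fin (n - 1)), w o • z o = x := by
      funext i
      rw [Finset.sum_apply, Fintype.sum_option]
      simp only [Pi.smul_apply, smul_eq_mul]
      rw [hznone i, mul_zero, zero_add]
      have : ∀ j : Fin (n - 1), w (some j) * z (some j) i
          = if i = j then x j / n * n else 0 := by
        intro j
        rw [hzsome j i]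
        simp only [hw, Option.elim, mul_ite, mul_zero]
      simp_rw [this]
      rw [Finset.sum_ite_eq]
      simp only [Finset.mem_univ, if_true]
      field_simp
    rw [← hcomb]
    exact (convex_convexHull ℝ SD).sum_mem (fun o _ => hw0 o) hwsum (fun o _ => hzmem o)

lemma not_interior_aux {n : ℕ} (hn : 2 ≤ n) (p d : Fin (n - 1) → ℝ)
    (hd : ∀ t : ℝ, 0 < t →
      (fun j => p j + t * d j) ∉ {x : Fin (n - 1) → ℝ | (∀ j, 0 ≤ x j) ∧ ∑ j, x j ≤ (n : ℝ)}) :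
    p ∉ interior {x : Fin (n - 1) → ℝ | (∀ j, 0 ≤ x j) ∧ ∑ j, x j ≤ (n : ℝ)} := by
  intro hp
  set T := {x : Fin (n - 1) → ℝ | (∀ j, 0 ≤ x j) ∧ ∑ j, x j ≤ (n : ℝ)}
  have hf : Continuous (fun t : ℝ => fun j => p j + t * d j) := by
    apply continuous_pi
    intro j
    exact continuous_const.add (continuous_id.mul continuous_const)
  have hopen : IsOpen ((fun t : ℝ => fun j => p j + t * d j) ⁻¹' interior T) :=
    isOpen_interior.preimage hf
  have h0 : (0 : ℝ) ∈ (fun t : ℝ => fun j => p j + t * d j) ⁻¹' interior T := by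
    show (fun j => p j + 0 * d j) ∈ interior T
    have : (fun j => p j + 0 * d j) = p := by funext j; ring
    rw [this]
    exact hp
  obtain ⟨ε, hε, hball⟩ := Metric.isOpen_iff.1 hopen 0 h0
  have ht : (ε / 2) ∈ (fun t : ℝ => fun j => p j + t * d j) ⁻¹' interior T := by
    apply hball
    rw [Metric.mem_ball, Real.dist_eq, sub_zero, abs_of_pos (by linarith)]
    linarith
  exact hd (ε / 2) (by linarith) (interior_subset ht)

/-- For `n ≥ 2` and any simple graph `g` on `n` vertices, the model
polytope `𝒫_n` (the convex hull of the truncated shell distributions of all simple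
graphs on `n` vertices) equals `{x ∈ ℝ^{n-1} : xⱼ ≥ 0, Σ xⱼ ≤ n}`, and the truncated
shell distribution `(n_0(g), …, n_{n-2}(g))` of `g` never lies in the interior of
`𝒫_n`; hence for a sample of size one the MLE never exists. -/
theorem truncated_shell_distribution_not_mem_interior {n : ℕ} (hn : 2 ≤ n)
    (G : SimpleGraph (Fin n)) :
    convexHull ℝ {x : Fin (n - 1) → ℝ |
        ∃ H : SimpleGraph (Fin n), x = fun j : Fin (n - 1) => (shellCount H (j : ℕ) : ℝ)} =
      {x : Fin (n - 1) → ℝ | (∀ j, 0 ≤ x j) ∧ ∑ j, x j ≤ (n : ℝ)} ∧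
    (fun j : Fin (n - 1) => (shellCount G (j : ℕ) : ℝ)) ∉
      interior (convexHull ℝ {x : Fin (n - 1) → ℝ |
        ∃ H : SimpleGraph (Fin n), x = fun j : Fin (n - 1) => (shellCount H (j : ℕ) : ℝ)}) := by
  refine ⟨hull_eq hn, ?_⟩
  rw [hull_eq hn]
  by_cases hc : shellCount G (n - 1) = 0
  · -- the truncated sum equals n : perturb upwards
    have hsum : ∑ j : Fin (n - 1), (shellCount G (j : ℕ) : ℝ) = (n : ℝ) := by
      have h0 := sum_shellCount G (by omega)
      have hn1 : n - 1 + 1 = n := by omega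
      have h0' : ∑ j ∈ Finset.range (n - 1 + 1), shellCount G j = n := by
        rw [hn1]; exact h0
      rw [Finset.sum_range_succ, hc, add_zero] at h0'
      rw [Fin.sum_univ_eq_sum_range (fun j => (shellCount G j : ℝ)) (n - 1)]
      exact_mod_cast congrArg (Nat.cast : ℕ → ℝ) h0'
    apply not_interior_aux hn _ (fun _ => 1)
    intro t ht hmem
    have h2 := hmem.2
    simp only [mul_one] at h2
    rw [Finset.sum_add_distrib, hsum, Finset.sum_const, Finset.card_univ,
      Fintype.card_fin, nsmul_eq_mul] at h2
    have hcard : (1 : ℝ) ≤ ((n - 1 : ℕ) : ℝ) := by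
      have h3 : 1 ≤ n - 1 := by omega
      exact_mod_cast h3
    nlinarith
  · -- some vertex has shell index n - 1 : the point is 0, perturb downwards
    have hex : ∃ v : Fin n, shellIndex G v = n - 1 := by
      have hne : Nonempty {v : Fin n // shellIndex G v = n - 1} :=
        (Nat.card_ne_zero.1 hc).1
      obtain ⟨x⟩ := hne
      exact ⟨x.1, x.2⟩
    obtain ⟨v, hv⟩ := hex
    have hall := all_shellIndex_of_max hn G hv
    have hp0 : ∀ j : Fin (n - 1), (shellCount G (j : ℕ) : ℝ) = 0 := by
      intro j
      rw [shellCount_eq_zero G hall (j := (j : ℕ)) (by have := j.isLt; omega), Nat.cast_zero]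
    apply not_interior_aux hn _ (fun _ => -1)
    intro t ht hmem
    have j0 : Fin (n - 1) := ⟨0, by omega⟩
    have h1 := hmem.1 j0
    simp only at h1
    rw [hp0 j0] at h1
    nlinarith
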